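/- Let u = (u_n) be a T-sequence in a group G and let p : G → X be a group homomorphism into a topological group X. Then p is continuous with respect to τ_u (the finest Hausdorff group topology on G in which u_n → e) if and only if p(u_n) converges to the identity of X. -/

import Mathlib

open Filter Topology Pointwise

/-- `u` converges to the identity in the group topology `t`. -/
def TendstoOne {G : Type*} [Group G] (t : GroupTopology G) (u : ℕ → G) : Prop :=
  Filter.Tendsto u Filter.atTop (@nhds G t.toTopologicalSpace 1)

/-- The group topology `t` is Hausdorff. -/
def IsHausdorffGT {G : Type*} [Group G] (t : GroupTopology G) : Prop :=
  @T2Space G t.toTopologicalSpace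

/-- `S` is a `T_s`-set of sequences: some Hausdorff group topology makes every
sequence of `S` converge to the identity. -/
def IsTsSet {G : Type*} [Group G] (S : Set (ℕ → G)) : Prop :=
  ∃ t : GroupTopology G, IsHausdorffGT t ∧ ∀ u ∈ S, TendstoOne t u

/-- `τ` is the finest Hausdorff group topology on `G` in which every sequence of `S`
converges to the identity (recall that in Mathlib's order on topologies, finer = smaller). -/
def IsTauS {G : Type*} [Group G] (S : Set (ℕ → G)) (τ : GroupTopology G) : Prop :=
  IsHausdorffGT τ ∧ (∀ u ∈ S, TendstoOne τ u) ∧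
    ∀ t : GroupTopology G, IsHausdorffGT t → (∀ u ∈ S, TendstoOne t u) → τ ≤ t

/-- The given topological-group structure on `G`, as a term of `GroupTopology G`. -/
def ambientGT (G : Type*) [Group G] [τ : TopologicalSpace G] [h : IsTopologicalGroup G] :
    GroupTopology G := ⟨τ, h⟩

/-- The set of all sequences converging to the identity in a group topology. -/
def SeqConvOne {G : Type*} [Group G] (t : GroupTopology G) : Set (ℕ → G) :=
  {u | TendstoOne t u}

/-- `(G, τ)` is an `s`-group: its topology is the finest Hausdorff group topology in which
every member of some `T_s`-set of sequences converges to the identity. -/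
def IsSGroup (G : Type*) [Group G] [TopologicalSpace G] [IsTopologicalGroup G] [T2Space G] :
    Prop :=
  ∃ S : Set (ℕ → G), IsTauS S (ambientGT G)

/-- for a `T`-sequence `u` in `G` with finest topology `τ_u`, a homomorphism
`p : G → X` into a topological group is `τ_u`-continuous iff `p (u n) → 1` in `X`. -/
theorem stmt3 {G X : Type*} [Group G] [Group X] [TopologicalSpace X] [IsTopologicalGroup X]
    (u : ℕ → G) (τu : GroupTopology G) (hτu : IsTauS {u} τu) (p : G →* X) :
    @Continuous G X τu.toTopologicalSpace _ p ↔
      Filter.Tendsto (fun n => p (u n)) Filter.atTop (nhds (1 : X)) := by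
  obtain ⟨hT2, hconv, hmin⟩ := hτu
  constructor
  · intro hc
    have h1 : TendstoOne τu u := hconv u rfl
    have := (@Continuous.tendsto G X τu.toTopologicalSpace _ p hc 1).comp h1
    rw [map_one] at this; exact this
  · intro hp
    letI ind : GroupTopology G :=
      ⟨TopologicalSpace.induced p ‹_›, topologicalGroup_induced p⟩
    have hT2t : IsHausdorffGT (τu ⊓ ind) := by
      have hle : (τu ⊓ ind).toTopologicalSpace ≤ τu.toTopologicalSpace := by
        rw [GroupTopology.toTopologicalSpace_inf]; exact inf_le_left
      exact t2Space_antitone hle hT2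
    have hconvt : ∀ v ∈ ({u} : Set (ℕ → G)), TendstoOne (τu ⊓ ind) v := by
      rintro v rfl
      unfold TendstoOne
      rw [GroupTopology.toTopologicalSpace_inf, _root_.nhds_inf, Filter.tendsto_inf]
      refine ⟨hconv v rfl, ?_⟩
      rw [nhds_induced, Filter.tendsto_comap_iff]
      rw [map_one]; exact hp
    have hle : τu ≤ ind := le_trans (hmin _ hT2t hconvt) inf_le_right
    rw [continuous_iff_le_induced]
    exact GroupTopology.toTopologicalSpace_le.2 hle
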